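/- If X and Y are Hermitian positive semi-definite matrices with X ≤ Y in the Loewner order, then X∨Y = Y. -/

import Mathlib

open scoped Matrix Matrix.Norms.L2Operator ComplexOrder

/-- The positive semidefinite square root of a positive semidefinite matrix
(as defined in Mathlib of December 2024, since removed). -/
noncomputable def Matrix.PosSemidef.sqrt {n 𝕜 : Type*} [RCLike 𝕜] [Fintype n] [DecidableEq n]
    {A : Matrix n n 𝕜} (hA : A.PosSemidef) : Matrix n n 𝕜 :=
  hA.1.eigenvectorUnitary.1 * Matrix.diagonal ((↑) ∘ (√·) ∘ hA.1.eigenvalues) *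
    (star hA.1.eigenvectorUnitary : Matrix n n 𝕜)

/-- `MPInv A B` means `B` is the Moore-Penrose inverse of `A`. -/
def MPInv {n : ℕ} (A B : Matrix (Fin n) (Fin n) ℂ) : Prop :=
  A * B * A = A ∧ B * A * B = B ∧ (A * B).IsHermitian ∧ (B * A).IsHermitian

open scoped MatrixOrder in
lemma Matrix.PosSemidef.sqrt_eq_cfcSqrt {m : ℕ} {A : Matrix (Fin m) (Fin m) ℂ}
    (hA : A.PosSemidef) : hA.sqrt = CFC.sqrt A := by
  rw [CFC.sqrt_eq_real_sqrt A hA.nonneg, cfcₙ_eq_cfc, hA.1.cfc_eq, Matrix.IsHermitian.cfc,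
    Unitary.conjStarAlgAut_apply]
  rfl

open scoped MatrixOrder in
lemma Matrix.PosSemidef.sqrt_mul_self {m : ℕ} {A : Matrix (Fin m) (Fin m) ℂ}
    (hA : A.PosSemidef) : hA.sqrt * hA.sqrt = A := by
  rw [hA.sqrt_eq_cfcSqrt]; exact CFC.sqrt_mul_sqrt_self A hA.nonneg

open scoped MatrixOrder in
lemma Matrix.PosSemidef.posSemidef_sqrt {m : ℕ} {A : Matrix (Fin m) (Fin m) ℂ}
    (hA : A.PosSemidef) : hA.sqrt.PosSemidef := by
  rw [hA.sqrt_eq_cfcSqrt]; exact Matrix.nonneg_iff_posSemidef.mp (CFC.sqrt_nonneg A)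

open scoped MatrixOrder in
lemma Matrix.PosSemidef.eq_sqrt_of_sq_eq {m : ℕ} {A B : Matrix (Fin m) (Fin m) ℂ}
    (hB : B.PosSemidef) (hA : A.PosSemidef) (h : B ^ 2 = A) : B = hA.sqrt := by
  rw [hA.sqrt_eq_cfcSqrt]; exact (CFC.sqrt_unique (by rw [← sq]; exact h) hB.nonneg).symm

open scoped MatrixOrder in
lemma Matrix.PosSemidef.eq_of_sq_eq_sq {m : ℕ} {A B : Matrix (Fin m) (Fin m) ℂ}
    (hA : A.PosSemidef) (hB : B.PosSemidef) (h : A ^ 2 = B ^ 2) : A = B := by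
  have e1 := CFC.sqrt_unique (a := A ^ 2) (b := A) (sq A).symm hA.nonneg
  have e2 := CFC.sqrt_unique (a := B ^ 2) (b := B) (sq B).symm hB.nonneg
  rw [← e1, ← e2, h]

open scoped MatrixOrder in
lemma Matrix.posSemidef_iff_eq_transpose_mul_self {m : ℕ} {A : Matrix (Fin m) (Fin m) ℂ} :
    A.PosSemidef ↔ ∃ B : Matrix (Fin m) (Fin m) ℂ, A = Bᴴ * B := by
  constructor
  · intro h; exact CStarAlgebra.nonneg_iff_eq_star_mul_self.mp h.nonneg
  · rintro ⟨B, rfl⟩; exact Matrix.posSemidef_conjTranspose_mul_self B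

section Aux
open Matrix

private lemma psd_add_eq_zero {m : ℕ} {A B : Matrix (Fin m) (Fin m) ℂ}
    (hA : A.PosSemidef) (hB : B.PosSemidef) (h : A + B = 0) : A = 0 := by
  have hv : ∀ x : Fin m → ℂ, A *ᵥ x = 0 := by
    intro x
    rw [← hA.dotProduct_mulVec_zero_iff]
    have hsum : star x ⬝ᵥ A *ᵥ x + star x ⬝ᵥ B *ᵥ x = 0 := by
      rw [← dotProduct_add, ← add_mulVec, h, zero_mulVec, dotProduct_zero]
    refine le_antisymm ?_ (hA.dotProduct_mulVec_nonneg x)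
    rw [eq_neg_of_add_eq_zero_left hsum]
    exact neg_nonpos.mpr (hB.dotProduct_mulVec_nonneg x)
  ext i j
  have := congrFun (hv (Pi.single j 1)) i
  simpa using this

private lemma commute_sqrt {m : ℕ} {A B : Matrix (Fin m) (Fin m) ℂ} (hA : A.PosSemidef)
    (h : A * B = B * A) : hA.sqrt * B = B * hA.sqrt := by
  classical
  set U : Matrix (Fin m) (Fin m) ℂ := (hA.1.eigenvectorUnitary : Matrix (Fin m) (Fin m) ℂ) with hUdef
  have hU : U * star U = 1 := mem_unitaryGroup_iff.mp hA.1.eigenvectorUnitary.2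
  have hU' : star U * U = 1 := mem_unitaryGroup_iff'.mp hA.1.eigenvectorUnitary.2
  have hU2 : ∀ X : Matrix (Fin m) (Fin m) ℂ, star U * (U * X) = X := fun X => by
    rw [← Matrix.mul_assoc, hU', Matrix.one_mul]
  have hU3 : ∀ X : Matrix (Fin m) (Fin m) ℂ, U * (star U * X) = X := fun X => by
    rw [← Matrix.mul_assoc, hU, Matrix.one_mul]
  set d : Fin m → ℂ := RCLike.ofReal ∘ hA.1.eigenvalues with hddef
  set e : Fin m → ℂ := (↑) ∘ Real.sqrt ∘ hA.1.eigenvalues with hedef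
  have hsqrt : hA.sqrt = U * diagonal e * star U := rfl
  have hAspec : A = U * diagonal d * star U := hA.1.spectral_theorem
  set M : Matrix (Fin m) (Fin m) ℂ := star U * B * U with hMdef
  have hB : B = U * M * star U := by
    simp only [hMdef, Matrix.mul_assoc, hU, Matrix.mul_one, hU3]
  have hdM : diagonal d * M = M * diagonal d := by
    have h2 : star U * (A * B) * U = star U * (B * A) * U := by rw [h]
    rw [hAspec, hB] at h2
    calc diagonal d * M
        = star U * (U * diagonal d * star U * (U * M * star U)) * U := by
          simp only [Matrix.mul_assoc, hU2, hU3, hU, hU', Matrix.mul_one, Matrix.one_mul]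
      _ = star U * (U * M * star U * (U * diagonal d * star U)) * U := h2
      _ = M * diagonal d := by
          simp only [Matrix.mul_assoc, hU2, hU3, hU, hU', Matrix.mul_one, Matrix.one_mul]
  have heM : diagonal e * M = M * diagonal e := by
    ext i j
    simp only [diagonal_mul, mul_diagonal]
    rcases eq_or_ne (M i j) 0 with h0 | h0
    · simp [h0]
    · have hdij : d i = d j := by
        have hk : (d i - d j) * M i j = 0 := by
          have := congrFun (congrFun hdM i) j
          simp only [diagonal_mul, mul_diagonal] at this
          ring_nf
          linear_combination this
        rcases mul_eq_zero.mp hk with hk' | hk'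
        · exact sub_eq_zero.mp hk'
        · exact absurd hk' h0
      have hev : hA.1.eigenvalues i = hA.1.eigenvalues j := by
        have : (hA.1.eigenvalues i : ℂ) = (hA.1.eigenvalues j : ℂ) := hdij
        exact_mod_cast this
      have : e i = e j := by simp [hedef, hev]
      rw [this, mul_comm]
  rw [hsqrt, hB]
  calc U * diagonal e * star U * (U * M * star U)
      = U * (diagonal e * M) * star U := by
        simp only [Matrix.mul_assoc, hU2]
    _ = U * (M * diagonal e) * star U := by rw [heM]
    _ = U * M * star U * (U * diagonal e * star U) := by
        simp only [Matrix.mul_assoc, hU2]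

end Aux

open Matrix in
/-- If X ≤ Y in the Loewner order, then X∨Y = Y. -/
theorem sup_of_le {n : ℕ} (X Y Sd Sdh Wh : Matrix (Fin n) (Fin n) ℂ)
    (hX : X.PosSemidef) (hY : Y.PosSemidef) (hle : (Y - X).PosSemidef)
    (hSd : MPInv (X + Y) Sd)
    (hSdh : Sdh.PosSemidef) (hSdh2 : Sdh * Sdh = Sd)
    (hWh : Wh.PosSemidef)
    (hWh2 : Wh * Wh = Sdh * ((4 : ℂ)⁻¹ • (X + Y) - X * Sd * Y) * Sdh) :
    (2 : ℂ)⁻¹ • (X + Y) + (hX.add hY).sqrt * Wh * (hX.add hY).sqrt = Y := by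
  classical
  obtain ⟨h1, h2, h3, h4⟩ := hSd
  set S : Matrix (Fin n) (Fin n) ℂ := X + Y with hSdef
  set D : Matrix (Fin n) (Fin n) ℂ := Y - X with hDdef
  have hS : S.PosSemidef := hX.add hY
  set R : Matrix (Fin n) (Fin n) ℂ := (hX.add hY).sqrt with hRdef
  have hRR : R * R = S := (hX.add hY).sqrt_mul_self
  have hRH : Rᴴ = R := (hX.add hY).posSemidef_sqrt.1
  have hSdPSD : Sd.PosSemidef := by
    have := posSemidef_conjTranspose_mul_self Sdh
    rwa [hSdh.1, hSdh2] at this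
  have hcomm : S * Sd = Sd * S := by
    calc S * Sd = (S * Sd)ᴴ := h3.symm
      _ = Sdᴴ * Sᴴ := by rw [conjTranspose_mul]
      _ = Sd * S := by rw [hSdPSD.1, hS.1]
  set P : Matrix (Fin n) (Fin n) ℂ := S * Sd with hPdef
  have hPH : Pᴴ = P := h3
  have hPidem : P * P = P := by
    calc P * P = P * S * Sd := by rw [hPdef]; simp [Matrix.mul_assoc]
      _ = S * Sd := by rw [h1]
      _ = P := hPdef.symm
  -- P * D = D and D * P = D
  set Q : Matrix (Fin n) (Fin n) ℂ := 1 - P with hQdef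
  have hQH : Qᴴ = Q := by rw [hQdef, conjTranspose_sub, conjTranspose_one, hPH]
  have hQS : Q * S = 0 := by
    rw [hQdef, sub_mul, Matrix.one_mul, hPdef, h1, sub_self]
  have hQDQ : Q * D * Qᴴ = 0 := by
    have hSD : S - D = X + X := by rw [hSdef, hDdef]; abel
    have hA2 : (Q * (S - D) * Qᴴ).PosSemidef := by
      rw [hSD]; exact (hX.add hX).mul_mul_conjTranspose_same Q
    have hA1 : (Q * D * Qᴴ).PosSemidef := hle.mul_mul_conjTranspose_same Q
    refine psd_add_eq_zero hA1 hA2 ?_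
    rw [← add_mul, ← mul_add, add_sub_cancel, hQS, Matrix.zero_mul]
  -- D and P
  have hcomm' : Sd * S = S * Sd := by rw [← hPdef]; exact hcomm.symm
  have hDQ : D * Q = 0 := by
    obtain ⟨E, hE⟩ := posSemidef_iff_eq_transpose_mul_self.mp hle
    have hEQ : E * Qᴴ = 0 := by
      refine conjTranspose_mul_self_eq_zero.mp ?_
      rw [conjTranspose_mul, conjTranspose_conjTranspose]
      calc Q * Eᴴ * (E * Qᴴ) = Q * (Eᴴ * E) * Qᴴ := by simp [Matrix.mul_assoc]
        _ = 0 := by rw [← hE, hQDQ]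
    rw [hE, Matrix.mul_assoc, ← hQH, hEQ, Matrix.mul_zero]
  have hDP : D * P = D := by
    have h' := hDQ
    rw [hQdef, mul_sub, Matrix.mul_one, sub_eq_zero] at h'
    exact h'.symm
  have hPD : P * D = D := by
    have h' : Q * D = 0 := by
      have := congrArg conjTranspose hDQ
      rwa [conjTranspose_mul, hQH, hle.1, conjTranspose_zero] at this
    rw [hQdef, sub_mul, Matrix.one_mul, sub_eq_zero] at h'
    exact h'.symm
  -- commutation facts
  have hSdhS : Sdh * S = S * Sdh := by
    have hsq : Sdh = hSdPSD.sqrt := hSdh.eq_sqrt_of_sq_eq hSdPSD (by rw [sq]; exact hSdh2)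
    rw [hsq]
    exact commute_sqrt hSdPSD hcomm'
  have hRSdh : R * Sdh = Sdh * R := commute_sqrt (hX.add hY) hSdhS.symm
  -- R * Sdh = P
  have hprod : R * Sdh * (R * Sdh) = P := by
    calc R * Sdh * (R * Sdh) = R * (Sdh * R) * Sdh := by simp [Matrix.mul_assoc]
      _ = R * (R * Sdh) * Sdh := by rw [← hRSdh]
      _ = R * R * (Sdh * Sdh) := by simp [Matrix.mul_assoc]
      _ = P := by rw [hRR, hSdh2, ← hPdef]
  have hherm : (R * Sdh)ᴴ = R * Sdh := by
    rw [conjTranspose_mul, hRH, hSdh.1, ← hRSdh]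
  have hPpsd : P.PosSemidef := by
    rw [← hprod]
    nth_rewrite 1 [← hherm]
    exact posSemidef_conjTranspose_mul_self _
  have hRSdhpsd : (R * Sdh).PosSemidef := by
    have hFR : hSdh.sqrt * R = R * hSdh.sqrt := commute_sqrt hSdh hRSdh.symm
    have hrw : R * Sdh = hSdh.sqrt * R * hSdh.sqrtᴴ := by
      rw [hSdh.posSemidef_sqrt.1]
      calc R * Sdh = R * (hSdh.sqrt * hSdh.sqrt) := by rw [hSdh.sqrt_mul_self]
        _ = R * hSdh.sqrt * hSdh.sqrt := by rw [Matrix.mul_assoc]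
        _ = hSdh.sqrt * R * hSdh.sqrt := by rw [← hFR]
    rw [hrw]
    exact ((hX.add hY).posSemidef_sqrt).mul_mul_conjTranspose_same _
  have hRSdhP : R * Sdh = P := hRSdhpsd.eq_of_sq_eq_sq hPpsd (by rw [sq, sq, hprod, hPidem])
  -- the key algebraic identity
  have hXSY : X * Sd * Y = (4 : ℂ)⁻¹ • (S - D * Sd * D) := by
    have h2X : X + X = S - D := by rw [hSdef, hDdef]; abel
    have h2Y : Y + Y = S + D := by rw [hSdef, hDdef]; abel
    have hexp : (X + X) * Sd * (Y + Y) = (4 : ℂ) • (X * Sd * Y) := by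
      simp only [add_mul, mul_add]
      module
    have hSDS : (S - D) * Sd * (S + D) = S - D * Sd * D := by
      have e1 : (S - D) * Sd * (S + D) = S * Sd * S + S * Sd * D - D * Sd * S - D * Sd * D := by
        noncomm_ring
      rw [e1, ← hPdef, h1, hPD]
      have e2 : D * Sd * S = D := by rw [Matrix.mul_assoc, ← hcomm, hDP]
      rw [e2]
      abel
    calc X * Sd * Y = (4 : ℂ)⁻¹ • ((4 : ℂ) • (X * Sd * Y)) := by
          rw [smul_smul]; norm_num
      _ = (4 : ℂ)⁻¹ • ((X + X) * Sd * (Y + Y)) := by rw [hexp]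
      _ = (4 : ℂ)⁻¹ • ((S - D) * Sd * (S + D)) := by rw [h2X, h2Y]
      _ = (4 : ℂ)⁻¹ • (S - D * Sd * D) := by rw [hSDS]
  -- Wh + Wh = Sdh * D * Sdh
  have hWhD : Wh + Wh = Sdh * D * Sdh := by
    have hT : (Sdh * D * Sdh).PosSemidef := by
      have := hle.conjTranspose_mul_mul_same Sdh
      rwa [hSdh.1] at this
    refine (hWh.add hWh).eq_of_sq_eq_sq hT ?_
    rw [sq, sq]
    calc (Wh + Wh) * (Wh + Wh) = (4 : ℂ) • (Wh * Wh) := by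
          simp only [add_mul, mul_add]; module
      _ = (4 : ℂ) • (Sdh * ((4 : ℂ)⁻¹ • S - X * Sd * Y) * Sdh) := by rw [hWh2]
      _ = (4 : ℂ) • (Sdh * ((4 : ℂ)⁻¹ • (D * Sd * D)) * Sdh) := by
          have emid : (4 : ℂ)⁻¹ • S - (4 : ℂ)⁻¹ • (S - D * Sd * D) = (4 : ℂ)⁻¹ • (D * Sd * D) := by
            module
          rw [hXSY, emid]
      _ = Sdh * (D * Sd * D) * Sdh := by
          rw [Matrix.mul_smul, Matrix.smul_mul, smul_smul]
          norm_num
      _ = Sdh * D * Sdh * (Sdh * D * Sdh) := by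
          rw [← hSdh2]; simp [Matrix.mul_assoc]
  -- conclusion
  have hfin : R * (Wh + Wh) * R = D := by
    rw [hWhD]
    calc R * (Sdh * D * Sdh) * R = R * Sdh * D * (Sdh * R) := by simp [Matrix.mul_assoc]
      _ = P * D * P := by rw [← hRSdh, hRSdhP]
      _ = D := by rw [hPD, hDP]
  have h2Y' : S + D = (2 : ℂ) • Y := by rw [hSdef, hDdef, two_smul]; abel
  refine smul_right_injective (Matrix (Fin n) (Fin n) ℂ) (two_ne_zero (α := ℂ)) ?_
  show (2 : ℂ) • ((2 : ℂ)⁻¹ • S + R * Wh * R) = (2 : ℂ) • Y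
  calc (2 : ℂ) • ((2 : ℂ)⁻¹ • S + R * Wh * R)
      = S + R * (Wh + Wh) * R := by
        rw [smul_add, smul_smul]
        norm_num
        rw [two_smul, mul_add, add_mul]
    _ = S + D := by rw [hfin]
    _ = (2 : ℂ) • Y := h2Y'
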